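/- For a real $p \in (0,1)$ and integer $A \ge 2$, $\sum_{k=1}^{A-1} \binom{A}{k} p^k (1-p)^{A-k} \cdot \frac{1}{A-k} \le \frac{2}{(1-p)A}$. -/

import Mathlib

theorem stmt_1 (p : ℝ) (hp0 : 0 < p) (hp1 : p < 1) (A : ℕ) (hA : 2 ≤ A) :
    ∑ k ∈ Finset.Ico 1 A,
      (A.choose k : ℝ) * p ^ k * (1 - p) ^ (A - k) * (1 / ((A - k : ℕ) : ℝ))
      ≤ 2 / ((1 - p) * A) := by
  have h1p : (0:ℝ) < 1 - p := by linarith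
  have hq : (1 - p : ℝ) ≠ 0 := ne_of_gt h1p
  have hA1 : (0:ℝ) < (A:ℝ) + 1 := by positivity
  have key : ∀ k ∈ Finset.Ico 1 A,
      (A.choose k : ℝ) * p ^ k * (1 - p) ^ (A - k) * (1 / ((A - k : ℕ) : ℝ))
      ≤ (2 / ((1 - p) * ((A:ℝ) + 1))) *
        (((A+1).choose k : ℝ) * p ^ k * (1 - p) ^ (A + 1 - k)) := by
    intro k hk
    obtain ⟨hk1, hk2⟩ := Finset.mem_Ico.mp hk
    have hAk : 0 < A - k := Nat.sub_pos_of_lt hk2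
    have hnat : A.choose k * (A + 1) ≤ 2 * ((A+1).choose k) * (A - k) := by
      rw [Nat.choose_mul_succ_eq]
      have h2 : A + 1 - k ≤ 2 * (A - k) := by omega
      calc (A+1).choose k * (A + 1 - k) ≤ (A+1).choose k * (2 * (A - k)) :=
            Nat.mul_le_mul_left _ h2
        _ = 2 * ((A+1).choose k) * (A - k) := by ring
    have hd : (0:ℝ) < ((A - k : ℕ) : ℝ) := by exact_mod_cast hAk
    have hfrac : (A.choose k : ℝ) * (1 / ((A - k : ℕ) : ℝ))
        ≤ 2 * (((A+1).choose k : ℝ)) / ((A:ℝ) + 1) := by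
      rw [mul_one_div, div_le_div_iff₀ hd hA1]
      exact_mod_cast hnat
    have hs : (0:ℝ) ≤ p ^ k * (1 - p) ^ (A - k) := by positivity
    have heq : A + 1 - k = (A - k) + 1 := by omega
    calc (A.choose k : ℝ) * p ^ k * (1 - p) ^ (A - k) * (1 / ((A - k : ℕ) : ℝ))
        = (p ^ k * (1 - p) ^ (A - k)) * ((A.choose k : ℝ) * (1 / ((A - k : ℕ) : ℝ))) := by
          ring
      _ ≤ (p ^ k * (1 - p) ^ (A - k)) * (2 * (((A+1).choose k : ℝ)) / ((A:ℝ) + 1)) :=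
          mul_le_mul_of_nonneg_left hfrac hs
      _ = (2 / ((1 - p) * ((A:ℝ) + 1))) *
          (((A+1).choose k : ℝ) * p ^ k * (1 - p) ^ (A + 1 - k)) := by
          rw [heq, pow_succ]
          field_simp
  have hbin : ∑ k ∈ Finset.range (A + 2),
      (((A+1).choose k : ℝ) * p ^ k * (1 - p) ^ (A + 1 - k)) = 1 := by
    have h := add_pow p (1 - p) (A + 1)
    calc ∑ k ∈ Finset.range (A + 2),
          (((A+1).choose k : ℝ) * p ^ k * (1 - p) ^ (A + 1 - k))
        = ∑ k ∈ Finset.range ((A + 1) + 1),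
          (p ^ k * (1 - p) ^ (A + 1 - k) * ((A+1).choose k : ℝ)) :=
          Finset.sum_congr rfl (fun k _ => by ring)
      _ = (p + (1 - p)) ^ (A + 1) := h.symm
      _ = 1 := by ring
  calc ∑ k ∈ Finset.Ico 1 A,
        (A.choose k : ℝ) * p ^ k * (1 - p) ^ (A - k) * (1 / ((A - k : ℕ) : ℝ))
      ≤ ∑ k ∈ Finset.Ico 1 A, (2 / ((1 - p) * ((A:ℝ) + 1))) *
          (((A+1).choose k : ℝ) * p ^ k * (1 - p) ^ (A + 1 - k)) :=
        Finset.sum_le_sum key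
    _ = (2 / ((1 - p) * ((A:ℝ) + 1))) * ∑ k ∈ Finset.Ico 1 A,
          (((A+1).choose k : ℝ) * p ^ k * (1 - p) ^ (A + 1 - k)) := by
        rw [Finset.mul_sum]
    _ ≤ (2 / ((1 - p) * ((A:ℝ) + 1))) * ∑ k ∈ Finset.range (A + 2),
          (((A+1).choose k : ℝ) * p ^ k * (1 - p) ^ (A + 1 - k)) := by
        apply mul_le_mul_of_nonneg_left _ (by positivity)
        apply Finset.sum_le_sum_of_subset_of_nonneg
        · intro x hx
          simp only [Finset.mem_Ico, Finset.mem_range] at *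
          omega
        · intro i _ _
          positivity
    _ = 2 / ((1 - p) * ((A:ℝ) + 1)) := by rw [hbin, mul_one]
    _ ≤ 2 / ((1 - p) * (A:ℝ)) := by
        have hApos : (0:ℝ) < (A:ℝ) := by
          have : 0 < A := by omega
          exact_mod_cast this
        gcongr
        linarith
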